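/- Let ξ : [0,∞) → ℝ be twice differentiable with ξ(0)=0, ξ'(0)=v₀>0, and suppose sup_{t≥0} |ξ''(t)| < A and ξ'(t) > v₀/2 for all t ≥ 0. Consider a fluid particle x : ℝ → ℝ³ satisfying x''(t) = -∇Ψ(|x(t) - (ξ(t),0,0)|), where Ψ is C¹ with Ψ(r)=0 for r > r₀ and B = sup_r |Ψ'(r)| < ∞. If the particle is at rest before the interaction begins at time τ (so x'(τ) relative to the body is -(ξ'(τ),0,0) in the body frame) and the interaction lasts for a duration δ (i.e. |x(t)-(ξ(t),0,0)| ≤ r₀ exactly for t ∈ [τ, τ+δ]), then δ ≤ 4r₀ / (ξ'(τ) - 2δ(A+B)) whenever ξ'(τ) > 2δ(A+B). -/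

import Mathlib

open MeasureTheory Set

noncomputable def body (ξ : ℝ → ℝ) (t : ℝ) : EuclideanSpace ℝ (Fin 3) :=
  (WithLp.equiv 2 (Fin 3 → ℝ)).symm ![ξ t, 0, 0]

lemma abs_coord_le_norm (v : EuclideanSpace ℝ (Fin 3)) (i : Fin 3) : |v i| ≤ ‖v‖ := by
  rw [EuclideanSpace.norm_eq]
  calc |v i| = Real.sqrt (‖v i‖ ^ 2) := by
        rw [Real.sqrt_sq_eq_abs, Real.norm_eq_abs, abs_abs]
    _ ≤ _ := Real.sqrt_le_sqrt (Finset.single_le_sum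
        (f := fun j => ‖v j‖ ^ 2) (fun j _ => sq_nonneg _) (Finset.mem_univ i))

/-- the implicit bound on the collision duration. -/
theorem collision_duration_implicit_bound
    (ξ : ℝ → ℝ) (x : ℝ → EuclideanSpace ℝ (Fin 3)) (Ψ : ℝ → ℝ)
    (v₀ A B r₀ τ δ : ℝ)
    (hr₀ : 0 < r₀) (hδ : 0 < δ) (hτ : 0 ≤ τ) (hv₀ : 0 < v₀)
    (hξC2 : ContDiff ℝ 2 ξ) (hxC2 : ContDiff ℝ 2 x)
    (hΨC1 : ContDiff ℝ 1 Ψ)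
    (hξ0 : ξ 0 = 0) (hξ'0 : deriv ξ 0 = v₀)
    (hA : ∀ t ≥ (0:ℝ), |deriv (deriv ξ) t| < A)
    (hhalf : ∀ t ≥ (0:ℝ), deriv ξ t > v₀ / 2)
    (hΨsupp : ∀ r > r₀, Ψ r = 0)
    (hB : ∀ r, |deriv Ψ r| ≤ B)
    (hODE : ∀ t, deriv (deriv x) t =
      -(deriv Ψ (‖x t - body ξ t‖) / ‖x t - body ξ t‖) • (x t - body ξ t))
    (hrest : deriv x τ = 0)
    (hcoll : ∀ t, ‖x t - body ξ t‖ ≤ r₀ ↔ t ∈ Icc τ (τ + δ))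
    (hfast : deriv ξ τ > 2 * δ * (A + B)) :
    δ ≤ 4 * r₀ / (deriv ξ τ - 2 * δ * (A + B)) := by
  have hB0 : 0 ≤ B := le_trans (abs_nonneg _) (hB 0)
  have hA0 : 0 ≤ A := le_of_lt (lt_of_le_of_lt (abs_nonneg _) (hA 0 le_rfl))
  have hAB : 0 ≤ A + B := by linarith
  have hd : 0 < deriv ξ τ - 2 * δ * (A + B) := by linarith
  -- differentiability facts
  have hxd : Differentiable ℝ x := hxC2.differentiable two_ne_zero
  have hξd : Differentiable ℝ ξ := hξC2.differentiable two_ne_zero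
  have hx2 : Differentiable ℝ (deriv x) := by
    rw [show (2 : WithTop ℕ∞) = 1 + 1 by norm_num] at hxC2
    exact ((contDiff_succ_iff_deriv.mp hxC2).2.2).differentiable one_ne_zero
  have hξ2 : Differentiable ℝ (deriv ξ) := by
    rw [show (2 : WithTop ℕ∞) = 1 + 1 by norm_num] at hξC2
    exact ((contDiff_succ_iff_deriv.mp hξC2).2.2).differentiable one_ne_zero
  -- the first coordinate of the relative position
  set L : EuclideanSpace ℝ (Fin 3) →L[ℝ] ℝ := EuclideanSpace.proj 0 with hL
  set g : ℝ → ℝ := fun t => L (x t) - ξ t with hgdef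
  set g' : ℝ → ℝ := fun t => L (deriv x t) - deriv ξ t with hg'def
  set g'' : ℝ → ℝ := fun t => L (deriv (deriv x) t) - deriv (deriv ξ) t with hg''def
  have hg : ∀ t, HasDerivAt g (g' t) t := fun t =>
    (L.hasFDerivAt.comp_hasDerivAt t (hxd t).hasDerivAt).sub (hξd t).hasDerivAt
  have hg' : ∀ t, HasDerivAt g' (g'' t) t := fun t =>
    (L.hasFDerivAt.comp_hasDerivAt t (hx2 t).hasDerivAt).sub (hξ2 t).hasDerivAt
  -- g t is the first coordinate of x t - body ξ t
  have hgcoord : ∀ t, g t = (x t - body ξ t) 0 := by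
    intro t
    have : (body ξ t) 0 = ξ t := by
      simp [body]
    simp only [hgdef, hL]
    rw [show (x t - body ξ t) 0 = (x t) 0 - (body ξ t) 0 from rfl, this]
    rfl
  -- bound on the particle acceleration
  have hacc : ∀ t, ‖deriv (deriv x) t‖ ≤ B := by
    intro t
    rw [hODE t, norm_smul]
    rcases eq_or_ne (‖x t - body ξ t‖) 0 with h0 | h0
    · rw [h0, mul_zero]; exact hB0
    · have hpos : 0 < ‖x t - body ξ t‖ := lt_of_le_of_ne (norm_nonneg _) (Ne.symm h0)
      rw [norm_neg, Real.norm_eq_abs, abs_div, abs_of_pos hpos,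
        div_mul_cancel₀ _ (ne_of_gt hpos)]
      exact hB _
  -- bound on |g''| on [τ, τ+δ]
  have hg''bd : ∀ t ∈ Icc τ (τ + δ), |g'' t| ≤ A + B := by
    intro t ht
    have ht0 : (0:ℝ) ≤ t := le_trans hτ ht.1
    have h1 : |L (deriv (deriv x) t)| ≤ B := by
      have : L (deriv (deriv x) t) = (deriv (deriv x) t) 0 := rfl
      rw [this]
      exact le_trans (abs_coord_le_norm _ _) (hacc t)
    have h2 : |deriv (deriv ξ) t| < A := hA t ht0
    calc |g'' t| ≤ |L (deriv (deriv x) t)| + |deriv (deriv ξ) t| := abs_sub _ _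
      _ ≤ A + B := by linarith
  -- value of g' at τ
  have hg'τ : g' τ = -deriv ξ τ := by
    simp only [hg'def, hrest, map_zero, zero_sub]
  -- MVT bound: g' t ≤ -deriv ξ τ + (A+B) * δ on [τ, τ+δ]
  have hmvt : ∀ t ∈ Icc τ (τ + δ), g' t ≤ -deriv ξ τ + (A + B) * δ := by
    intro t ht
    have key := norm_image_sub_le_of_norm_deriv_le_segment'
      (f := g') (f' := g'') (a := τ) (b := τ + δ) (C := A + B)
      (fun s hs => (hg' s).hasDerivWithinAt)
      (fun s hs => hg''bd s (Ico_subset_Icc_self hs)) t ht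
    rw [hg'τ] at key
    have h1 : g' t - -deriv ξ τ ≤ (A + B) * (t - τ) :=
      le_trans (le_abs_self _) key
    have h2 : (A + B) * (t - τ) ≤ (A + B) * δ := by
      apply mul_le_mul_of_nonneg_left _ hAB
      linarith [ht.2]
    linarith
  -- second integration: antitone trick
  set c : ℝ := deriv ξ τ - (A + B) * δ with hc
  have hh : ∀ s, HasDerivAt (fun u => g u + c * u) (g' s + c) s := by
    intro s
    have h1 : HasDerivAt (fun u : ℝ => c * u) c s := by
      simpa using (hasDerivAt_id s).const_mul c
    exact (hg s).add h1
  have hhdiff : Differentiable ℝ (fun u => g u + c * u) := fun s => (hh s).differentiableAt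
  have hanti : AntitoneOn (fun s => g s + c * s) (Icc τ (τ + δ)) := by
    apply antitoneOn_of_deriv_nonpos (convex_Icc _ _)
      hhdiff.continuous.continuousOn hhdiff.differentiableOn
    intro s hs
    rw [interior_Icc] at hs
    rw [(hh s).deriv]
    have := hmvt s (Ioo_subset_Icc_self hs)
    simp only [hc]
    linarith
  have hstep := hanti (left_mem_Icc.mpr (by linarith)) (right_mem_Icc.mpr (by linarith))
    (by linarith : τ ≤ τ + δ)
  -- boundary bounds
  have hbd : ∀ t ∈ Icc τ (τ + δ), |g t| ≤ r₀ := by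
    intro t ht
    rw [hgcoord t]
    exact le_trans (abs_coord_le_norm _ _) ((hcoll t).mpr ht)
  have hbτ := abs_le.mp (hbd τ (left_mem_Icc.mpr (by linarith)))
  have hbτδ := abs_le.mp (hbd (τ + δ) (right_mem_Icc.mpr (by linarith)))
  have hexp : c * (τ + δ) = c * τ + c * δ := by ring
  have hkey : c * δ ≤ 2 * r₀ := by
    simp only at hstep
    linarith [hstep, hexp, hbτ.2, hbτδ.1]
  rw [le_div_iff₀ hd]
  have hsq : 0 ≤ δ * δ * (A + B) := mul_nonneg (mul_nonneg hδ.le hδ.le) hAB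
  nlinarith [hkey, hsq, hr₀]
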